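/- arXiv:1601.06537 — 3 statements merged into one kernel-verified Lean document; each statement's English description precedes it below -/
import Mathlib

section
/- Suppose the support 𝒮 = {a ∈ 𝒜 : p_a > 0} of P is finite. Then for every integer n ≥ 1 and every integer r with 0 ≤ r ≤ n−1, E M_{n,r} ≤ c(r)·|𝒮|/n, and moreover E M_{n,n} ≤ p_⋆^{n+1}·|𝒮|, where p_⋆ = max{p_a : a ∈ 𝒜}. -/
open MeasureTheory

lemma binom_term_le_one {m k : ℕ} (hk : k ≤ m) {p : ℝ} (hp0 : 0 ≤ p) (hp1 : p ≤ 1) :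
    (m.choose k : ℝ) * (p ^ k * (1 - p) ^ (m - k)) ≤ 1 := by
  have hsum : ∑ i ∈ Finset.range (m + 1), p ^ i * (1 - p) ^ (m - i) * (m.choose i : ℝ) = 1 := by
    rw [← add_pow]; ring_nf
  have h1p : (0:ℝ) ≤ 1 - p := by linarith
  have h := Finset.single_le_sum (f := fun i => p ^ i * (1 - p) ^ (m - i) * (m.choose i : ℝ))
    (fun i _ => by positivity) (Finset.mem_range.2 (Nat.lt_succ_of_le hk))
  have he : (m.choose k : ℝ) * (p ^ k * (1 - p) ^ (m - k))
      = p ^ k * (1 - p) ^ (m - k) * (m.choose k : ℝ) := by ring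
  rw [he]
  linarith [h, hsum]

lemma key_bound {n r : ℕ} (hr : r ≤ n) {p : ℝ} (hp0 : 0 ≤ p) (hp1 : p ≤ 1) :
    (n.choose r : ℝ) * (p ^ (r + 1) * (1 - p) ^ (n - r)) ≤ (r + 1) / (n + 1) := by
  have hid : (n + 1) * n.choose r = (n + 1).choose (r + 1) * (r + 1) :=
    Nat.add_one_mul_choose_eq n r
  have hidR : ((n : ℝ) + 1) * (n.choose r : ℝ)
      = ((n + 1).choose (r + 1) : ℝ) * ((r : ℝ) + 1) := by exact_mod_cast hid
  have hb := binom_term_le_one (m := n + 1) (k := r + 1) (by omega) hp0 hp1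
  have hsub : n + 1 - (r + 1) = n - r := by omega
  rw [hsub] at hb
  have hn1 : (0 : ℝ) < (n : ℝ) + 1 := by positivity
  rw [le_div_iff₀ hn1]
  set P : ℝ := p ^ (r + 1) * (1 - p) ^ (n - r) with hP
  calc (n.choose r : ℝ) * P * ((n : ℝ) + 1) = (((n : ℝ) + 1) * (n.choose r : ℝ)) * P := by ring
    _ = (((n + 1).choose (r + 1) : ℝ) * ((r : ℝ) + 1)) * P := by rw [hidR]
    _ = ((r : ℝ) + 1) * (((n + 1).choose (r + 1) : ℝ) * P) := by ring
    _ ≤ ((r : ℝ) + 1) * 1 := mul_le_mul_of_nonneg_left hb (by positivity)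
    _ = (r : ℝ) + 1 := by ring

lemma r0_bound {n : ℕ} (hn : 1 ≤ n) {p : ℝ} (hp0 : 0 ≤ p) (hp1 : p ≤ 1) :
    p * (1 - p) ^ n ≤ Real.exp (-1) / n := by
  have h1 : (1 - p) ^ n ≤ Real.exp (-((n : ℝ) * p)) := by
    calc (1 - p) ^ n ≤ Real.exp (-p) ^ n := by
          apply pow_le_pow_left₀ (by linarith)
          linarith [Real.add_one_le_exp (-p)]
      _ = Real.exp ((n : ℝ) * (-p)) := (Real.exp_nat_mul _ _).symm
      _ = Real.exp (-((n : ℝ) * p)) := by ring_nf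
  have h2 : p * (1 - p) ^ n ≤ p * Real.exp (-((n : ℝ) * p)) :=
    mul_le_mul_of_nonneg_left h1 hp0
  set t : ℝ := (n : ℝ) * p with ht
  have h3 : t * Real.exp (-t) ≤ Real.exp (-1) := by
    have h := Real.add_one_le_exp (t - 1)
    have h4 : t * Real.exp (-t) ≤ Real.exp (t - 1) * Real.exp (-t) :=
      mul_le_mul_of_nonneg_right (by linarith) (Real.exp_nonneg _)
    rw [← Real.exp_add, show t - 1 + -t = -1 by ring] at h4
    exact h4
  have hnpos : (0 : ℝ) < n := by exact_mod_cast hn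
  have h5 : p * Real.exp (-t) ≤ Real.exp (-1) / n := by
    rw [le_div_iff₀ hnpos]
    calc p * Real.exp (-t) * n = t * Real.exp (-t) := by rw [ht]; ring
      _ ≤ Real.exp (-1) := h3
  linarith

/-- The constant `c(r)`: `c(0) = e⁻¹` and `c(r) = e(1+r)/√π` for `r ≥ 1`. -/
noncomputable def cconst (r : ℕ) : ℝ :=
  if r = 0 then Real.exp (-1) else Real.exp 1 * (1 + r) / Real.sqrt Real.pi

/-- The expected occupancy probability
`E M_{n,r} = C(n,r) ∑_a p_a^{r+1} (1 - p_a)^{n-r}`. -/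
noncomputable def expOcc {A : Type*} (p : A → ℝ) (n r : ℕ) : ℝ :=
  (n.choose r : ℝ) * ∑' a, p a ^ (r + 1) * (1 - p a) ^ (n - r)

/-- Finite support case: `E M_{n,r} ≤ c(r)|𝒮|/n` for `0 ≤ r ≤ n-1`,
and `E M_{n,n} ≤ p⋆^{n+1}|𝒮|`. -/
theorem expected_occupancy_finite_support
    {A : Type*} [Countable A]
    (p : A → ℝ) (hp0 : ∀ a, 0 ≤ p a) (hp1 : ∑' a, p a = 1)
    (hS : ({a | 0 < p a} : Set A).Finite)
    (pstar : ℝ) (hpstar : IsGreatest (Set.range p) pstar)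
    (n : ℕ) (hn : 1 ≤ n) :
    (∀ r : ℕ, r ≤ n - 1 →
        expOcc p n r ≤ cconst r * (({a | 0 < p a} : Set A).ncard : ℝ) / n)
      ∧ expOcc p n n ≤ pstar ^ (n + 1) * (({a | 0 < p a} : Set A).ncard : ℝ) := by
  classical
  have hsummable : Summable p := by
    by_contra h
    rw [tsum_eq_zero_of_not_summable h] at hp1
    norm_num at hp1
  have hple : ∀ a, p a ≤ 1 := fun a => hp1 ▸ Summable.le_tsum hsummable a (fun b _ => hp0 b)
  set S := hS.toFinset with hSdef
  have hcard : (({a | 0 < p a} : Set A).ncard : ℝ) = (S.card : ℝ) := by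
    rw [Set.ncard_eq_toFinset_card _ hS]
  have hzero : ∀ a, a ∉ S → p a = 0 := by
    intro a ha
    rw [hSdef, Set.Finite.mem_toFinset] at ha
    have : ¬ 0 < p a := ha
    linarith [hp0 a]
  have hnpos : (0 : ℝ) < n := by exact_mod_cast hn
  constructor
  · intro r hr
    have hrn : r ≤ n := by omega
    rw [expOcc]
    have htsum : ∑' a, p a ^ (r + 1) * (1 - p a) ^ (n - r)
        = ∑ a ∈ S, p a ^ (r + 1) * (1 - p a) ^ (n - r) := by
      apply tsum_eq_sum
      intro a ha
      simp [hzero a ha]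
    rw [htsum, Finset.mul_sum]
    have hbound : ∀ a ∈ S, (n.choose r : ℝ) * (p a ^ (r + 1) * (1 - p a) ^ (n - r))
        ≤ cconst r / n := by
      intro a _
      rcases Nat.eq_zero_or_pos r with hr0 | hr0
      · subst hr0
        simp only [Nat.choose_zero_right, Nat.cast_one, one_mul, Nat.sub_zero, pow_one,
          cconst, if_true, Nat.cast_zero, eq_self_iff_true]
        simpa using r0_bound hn (hp0 a) (hple a)
      · have h1 := key_bound hrn (hp0 a) (hple a)
        have hsπ : Real.sqrt Real.pi ≤ 2 := by
          nlinarith [Real.sq_sqrt Real.pi_pos.le, Real.sqrt_nonneg Real.pi, Real.pi_le_four]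
        have hπpos : (0 : ℝ) < Real.sqrt Real.pi := Real.sqrt_pos.2 Real.pi_pos
        have he : (2 : ℝ) ≤ Real.exp 1 := by linarith [Real.add_one_le_exp 1]
        have hc : (r : ℝ) + 1 ≤ cconst r := by
          rw [cconst, if_neg (Nat.pos_iff_ne_zero.mp hr0), le_div_iff₀ hπpos]
          nlinarith [Nat.cast_nonneg (α := ℝ) r]
        have h2 : ((r : ℝ) + 1) / ((n : ℝ) + 1) ≤ ((r : ℝ) + 1) / n := by
          gcongr <;> linarith
        have h3 : ((r : ℝ) + 1) / n ≤ cconst r / n := by gcongr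
        linarith
    calc ∑ a ∈ S, (n.choose r : ℝ) * (p a ^ (r + 1) * (1 - p a) ^ (n - r))
        ≤ ∑ _a ∈ S, cconst r / n := Finset.sum_le_sum hbound
      _ = (S.card : ℝ) * (cconst r / n) := by rw [Finset.sum_const, nsmul_eq_mul]
      _ = cconst r * (S.card : ℝ) / n := by ring
      _ = cconst r * (({a | 0 < p a} : Set A).ncard : ℝ) / n := by rw [hcard]
  · rw [expOcc]
    simp only [Nat.choose_self, Nat.cast_one, one_mul, Nat.sub_self, pow_zero, mul_one]
    have htsum : ∑' a, p a ^ (n + 1) = ∑ a ∈ S, p a ^ (n + 1) := by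
      apply tsum_eq_sum
      intro a ha
      simp [hzero a ha]
    rw [htsum]
    obtain ⟨a0, ha0⟩ := hpstar.1
    have hps0 : 0 ≤ pstar := ha0 ▸ hp0 a0
    have hbound : ∀ a ∈ S, p a ^ (n + 1) ≤ pstar ^ (n + 1) := fun a _ =>
      pow_le_pow_left₀ (hp0 a) (hpstar.2 ⟨a, rfl⟩) _
    calc ∑ a ∈ S, p a ^ (n + 1) ≤ ∑ _a ∈ S, pstar ^ (n + 1) := Finset.sum_le_sum hbound
      _ = (S.card : ℝ) * pstar ^ (n + 1) := by rw [Finset.sum_const, nsmul_eq_mul]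
      _ = pstar ^ (n + 1) * (({a | 0 < p a} : Set A).ncard : ℝ) := by rw [hcard]; ring
end

section
/- Suppose the counting function ν is regularly varying at 0 in the sense that ν(ε) = ε^{−α}·ℓ(1/ε) for all 0 < ε ≤ 1, for some α ∈ [0,1] and some function ℓ slowly varying at ∞. Then κ₊⁰ := lim_{ε→0} κ₊(ε) exists and equals 2^α, where κ₊(ε) = sup_{0<u≤ε} ν(u/2)/ν(u). -/
open MeasureTheory

/-- `ℓ` is slowly varying at `+∞`: `ℓ(cx)/ℓ(x) → 1` as `x → ∞` for every `c > 0`. -/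
def SlowlyVarying (ℓ : ℝ → ℝ) : Prop :=
  ∀ c : ℝ, 0 < c →
    Filter.Tendsto (fun x => ℓ (c * x) / ℓ x) Filter.atTop (nhds 1)

/-- `κ₊(ε) = sup_{0 < u ≤ ε} ν(u/2)/ν(u)`. -/
noncomputable def kplus (ν : ℝ → ℝ) (ε : ℝ) : ℝ :=
  sSup ((fun u => ν (u / 2) / ν u) '' Set.Ioc (0 : ℝ) ε)

/-- If the counting function is regularly varying at 0, `ν(ε) = ε^{-α} ℓ(1/ε)` on
`(0,1]` with `ℓ` slowly varying, then `κ₊(ε) → 2^α` as `ε → 0`. -/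
theorem kplus_limit_regularly_varying
    {A : Type*} [Countable A]
    (p : A → ℝ) (hp0 : ∀ a, 0 ≤ p a) (hp1 : ∑' a, p a = 1)
    (ν : ℝ → ℝ) (hν : ∀ ε : ℝ, ν ε = (({a | ε ≤ p a} : Set A).ncard : ℝ))
    (α : ℝ) (hα : α ∈ Set.Icc (0 : ℝ) 1)
    (ℓ : ℝ → ℝ) (hℓpos : ∀ x : ℝ, 0 < x → 0 < ℓ x) (hsv : SlowlyVarying ℓ)
    (hreg : ∀ ε : ℝ, 0 < ε → ε ≤ 1 → ν ε = ε ^ (-α) * ℓ (1 / ε)) :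
    Filter.Tendsto (kplus ν) (nhdsWithin 0 (Set.Ioi (0 : ℝ)))
      (nhds ((2 : ℝ) ^ α)) := by
  obtain ⟨hα0, hα1⟩ := hα
  have h2pos : (0:ℝ) < 2 ^ α := Real.rpow_pos_of_pos two_pos α
  rw [Metric.tendsto_nhdsWithin_nhds]
  intro δ hδ
  have hδ' : 0 < δ / (2 * 2 ^ α) := by positivity
  obtain ⟨X, hX⟩ := Metric.tendsto_atTop.1 (hsv 2 two_pos) _ hδ'
  have hM : (0:ℝ) < max X 1 := lt_of_lt_of_le one_pos (le_max_right _ _)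
  have key : ∀ u : ℝ, 0 < u → u ≤ 1 → max X 1 < 1 / u →
      |ν (u / 2) / ν u - 2 ^ α| < δ / 2 := by
    intro u hu hu1 hXu
    have hx : (0:ℝ) < 1 / u := by positivity
    have hgd := hX (1 / u) (le_of_lt (lt_of_le_of_lt (le_max_left X 1) hXu))
    rw [Real.dist_eq] at hgd
    have hr : ν (u / 2) / ν u = 2 ^ α * (ℓ (2 * (1 / u)) / ℓ (1 / u)) := by
      rw [hreg u hu hu1, hreg (u / 2) (by positivity) (by linarith)]
      have h1 : (1:ℝ) / (u / 2) = 2 * (1 / u) := by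
        field_simp
      rw [h1, Real.div_rpow hu.le (by norm_num : (0:ℝ) ≤ 2),
        Real.rpow_neg (by norm_num : (0:ℝ) ≤ 2)]
      have hu' : u ^ (-α) ≠ 0 := ne_of_gt (Real.rpow_pos_of_pos hu _)
      have h2' : (2:ℝ) ^ α ≠ 0 := ne_of_gt h2pos
      have hℓu : ℓ (1 / u) ≠ 0 := ne_of_gt (hℓpos _ hx)
      field_simp
    rw [hr]
    have heq : 2 ^ α * (ℓ (2 * (1 / u)) / ℓ (1 / u)) - 2 ^ α
        = 2 ^ α * (ℓ (2 * (1 / u)) / ℓ (1 / u) - 1) := by ring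
    rw [heq, abs_mul, abs_of_pos h2pos]
    calc 2 ^ α * |ℓ (2 * (1 / u)) / ℓ (1 / u) - 1|
        < 2 ^ α * (δ / (2 * 2 ^ α)) := by
          exact (mul_lt_mul_iff_right₀ h2pos).2 hgd
      _ = δ / 2 := by field_simp
  refine ⟨min 1 (1 / max X 1), by positivity, ?_⟩
  intro ε hε hdist
  have hε0 : (0:ℝ) < ε := hε
  rw [Real.dist_eq, sub_zero, abs_of_pos hε0] at hdist
  have hε1 : ε ≤ 1 := le_of_lt (lt_of_lt_of_le hdist (min_le_left _ _))
  have hεX : ε < 1 / max X 1 := lt_of_lt_of_le hdist (min_le_right _ _)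
  have hmem : ∀ u ∈ Set.Ioc (0:ℝ) ε, |ν (u / 2) / ν u - 2 ^ α| < δ / 2 := by
    rintro u ⟨hu0, huε⟩
    apply key u hu0 (huε.trans hε1)
    rw [lt_div_iff₀ hu0]
    have h' : u < 1 / max X 1 := lt_of_le_of_lt huε hεX
    rw [lt_div_iff₀ hM] at h'
    nlinarith
  set s := (fun u => ν (u / 2) / ν u) '' Set.Ioc (0 : ℝ) ε with hs
  have hne : s.Nonempty := ⟨_, ⟨ε, ⟨hε0, le_refl ε⟩, rfl⟩⟩
  have hub : ∀ x ∈ s, x ≤ 2 ^ α + δ / 2 := by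
    rintro x ⟨u, hu, rfl⟩
    have := hmem u hu
    cases abs_lt.1 this with
    | intro h1 h2 => linarith
  have hsup_le : sSup s ≤ 2 ^ α + δ / 2 := csSup_le hne hub
  have hle_sup : 2 ^ α - δ / 2 ≤ sSup s := by
    have hmemε : ν (ε / 2) / ν ε ∈ s := ⟨ε, ⟨hε0, le_refl ε⟩, rfl⟩
    have hbd : BddAbove s := ⟨2 ^ α + δ / 2, hub⟩
    have h := hmem ε ⟨hε0, le_refl ε⟩
    have h' := (abs_lt.1 h).1
    have := le_csSup hbd hmemε
    linarith
  rw [Real.dist_eq]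
  rw [abs_lt]
  constructor
  · simp only [kplus, ← hs]; linarith
  · simp only [kplus, ← hs]; linarith
end

section
/- Let (E,d) be a metric space, P a Borel probability measure on E, δ > 0 and n ≥ 1. Then for every x ∈ E, every t > 0, every ρ with 0 < ρ ≤ δ/2, and every finite family of open balls B_1,…,B_N of radius ρ covering the open ball B_{x,t} = {u : d(x,u) < t}, the expected generalized missing mass satisfies E M^{(δ)}_{n,0} = ∫_E (1 − P(B_{u,δ}))^n P(du) ≤ (1 − P(B_{x,t})) + N/(n·e). In particular, writing τ_x(t) = 1 − P(B_{x,t}) and N_x(t,ρ) for the ρ-covering number of B_{x,t}, one has E M^{(δ)}_{n,0} ≤ inf_{x∈E, t>0, 0<ρ≤δ/2} { τ_x(t) + N_x(t,ρ)/(n·e) }. -/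
open MeasureTheory Metric Set

/-- The function `u ↦ P(B(u,δ))` is lower semicontinuous. -/
lemma lsc_measure_ball_aux {E : Type*} [MetricSpace E] [MeasurableSpace E] [BorelSpace E]
    (P : Measure E) (δ : ℝ) : LowerSemicontinuous fun u : E => P (Metric.ball u δ) := by
  intro u C hC
  have hU : Metric.ball u δ = ⋃ k : ℕ, Metric.ball u (δ - 1/(k+1)) := by
    ext v
    simp only [Metric.mem_ball, mem_iUnion]
    constructor
    · intro h
      obtain ⟨k, hk⟩ := exists_nat_one_div_lt (sub_pos.2 h)
      exact ⟨k, by linarith⟩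
    · rintro ⟨k, hk⟩
      have : (0:ℝ) < 1/((k:ℝ)+1) := by positivity
      linarith
  have hmono : Monotone fun k : ℕ => Metric.ball u (δ - 1/((k:ℝ)+1)) := by
    intro a b hab
    apply Metric.ball_subset_ball
    have h1 : (1:ℝ)/((b:ℝ)+1) ≤ 1/((a:ℝ)+1) := by
      apply one_div_le_one_div_of_le (by positivity)
      have : (a:ℝ) ≤ b := by exact_mod_cast hab
      linarith
    linarith
  have htend := tendsto_measure_iUnion_atTop (μ := P) hmono
  rw [← hU] at htend
  obtain ⟨k, hk⟩ := (htend.eventually (isOpen_Ioi.eventually_mem hC)).exists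
  have hpos : (0:ℝ) < 1/((k:ℝ)+1) := by positivity
  filter_upwards [Metric.ball_mem_nhds u hpos] with v hv
  refine lt_of_lt_of_le hk (measure_mono ?_)
  intro w hw
  simp only [Metric.mem_ball] at hw hv ⊢
  calc dist w v ≤ dist w u + dist u v := dist_triangle _ _ _
    _ < (δ - 1/((k:ℝ)+1)) + 1/((k:ℝ)+1) := by
        rw [dist_comm u v]; exact add_lt_add hw hv
    _ = δ := by ring

/-- Key scalar inequality: `(1-p)^n p ≤ 1/(n e)` for `p ∈ [0,1]`. -/
lemma pow_one_sub_mul_le_aux {p : ℝ} (hp0 : 0 ≤ p) (hp1 : p ≤ 1) {n : ℕ} (hn : 1 ≤ n) :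
    (1 - p) ^ n * p ≤ 1 / (n * Real.exp 1) := by
  have hn0 : (0:ℝ) < n := by exact_mod_cast hn
  have h1 : (1 - p) ^ n ≤ Real.exp (-((n:ℝ) * p)) := by
    calc (1 - p) ^ n ≤ (Real.exp (-p)) ^ n := by
          apply pow_le_pow_left₀ (by linarith)
          have := Real.add_one_le_exp (-p)
          linarith
      _ = Real.exp (-((n:ℝ) * p)) := by
          rw [← Real.exp_nat_mul]; ring_nf
  have h3 : (n:ℝ) * p ≤ Real.exp ((n:ℝ) * p - 1) := by
    have := Real.add_one_le_exp ((n:ℝ) * p - 1)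
    linarith
  have h2 : ((n:ℝ) * p) * Real.exp (-((n:ℝ) * p)) ≤ Real.exp (-1) := by
    calc ((n:ℝ) * p) * Real.exp (-((n:ℝ) * p))
        ≤ Real.exp ((n:ℝ) * p - 1) * Real.exp (-((n:ℝ) * p)) :=
          mul_le_mul_of_nonneg_right h3 (Real.exp_pos _).le
      _ = Real.exp (-1) := by rw [← Real.exp_add]; ring_nf
  have h4 : p * Real.exp (-((n:ℝ) * p)) ≤ Real.exp (-1) / n := by
    rw [le_div_iff₀ hn0]
    calc p * Real.exp (-((n:ℝ) * p)) * n = ((n:ℝ) * p) * Real.exp (-((n:ℝ) * p)) := by ring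
      _ ≤ Real.exp (-1) := h2
  calc (1 - p) ^ n * p = p * (1 - p) ^ n := by ring
    _ ≤ p * Real.exp (-((n:ℝ) * p)) := mul_le_mul_of_nonneg_left h1 hp0
    _ ≤ Real.exp (-1) / n := h4
    _ = 1 / (n * Real.exp 1) := by
        rw [Real.exp_neg]
        field_simp

/-- Generalized occupancy problem in a metric space: for every `x ∈ E`, `t > 0`,
`0 < ρ ≤ δ/2` and every finite family of `ρ`-balls covering `B_{x,t}`, the expected
generalized missing mass `E M^{(δ)}_{n,0} = ∫_E (1 - P(B_{u,δ}))^n P(du)` satisfies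
`E M^{(δ)}_{n,0} ≤ (1 - P(B_{x,t})) + N/(n e)`. -/
theorem generalized_missing_mass_upper_bound
    {E : Type*} [MetricSpace E] [MeasurableSpace E] [BorelSpace E]
    (P : Measure E) [IsProbabilityMeasure P]
    (δ : ℝ) (hδ : 0 < δ) (n : ℕ) (hn : 1 ≤ n)
    (x : E) (t : ℝ) (ht : 0 < t)
    (ρ : ℝ) (hρ : 0 < ρ) (hρδ : ρ ≤ δ / 2)
    (N : ℕ) (c : Fin N → E)
    (hcover : Metric.ball x t ⊆ ⋃ i, Metric.ball (c i) ρ) :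
    ∫ u, (1 - (P (Metric.ball u δ)).toReal) ^ n ∂P
      ≤ (1 - (P (Metric.ball x t)).toReal) + N / (n * Real.exp 1) := by
  set f : E → ℝ := fun u => (1 - (P (Metric.ball u δ)).toReal) ^ n with hfdef
  have htoReal_le_one : ∀ s : Set E, (P s).toReal ≤ 1 := by
    intro s
    have h := prob_le_one (μ := P) (s := s)
    simpa using ENNReal.toReal_mono ENNReal.one_ne_top h
  have hf0 : ∀ u, 0 ≤ f u := fun u =>
    pow_nonneg (by linarith [htoReal_le_one (Metric.ball u δ)]) n
  have hf1 : ∀ u, f u ≤ 1 := fun u =>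
    pow_le_one₀ (by linarith [htoReal_le_one (Metric.ball u δ)])
      (by linarith [ENNReal.toReal_nonneg (a := P (Metric.ball u δ))])
  have hmb : Measurable fun u : E => P (Metric.ball u δ) :=
    (lsc_measure_ball_aux P δ).measurable
  have hmf : Measurable f := (measurable_const.sub hmb.ennreal_toReal).pow_const n
  have hint : Integrable f P := by
    refine Integrable.mono' (integrable_const 1) hmf.aestronglyMeasurable ?_
    filter_upwards with u
    rw [Real.norm_eq_abs, abs_of_nonneg (hf0 u)]
    exact hf1 u
  have hsplit : ∫ u, f u ∂P
      = ∫ u in Metric.ball x t, f u ∂P + ∫ u in (Metric.ball x t)ᶜ, f u ∂P :=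
    (integral_add_compl measurableSet_ball hint).symm
  -- complement part
  have hcompl : ∫ u in (Metric.ball x t)ᶜ, f u ∂P ≤ 1 - (P (Metric.ball x t)).toReal := by
    have h := setIntegral_mono_on (s := (Metric.ball x t)ᶜ) hint.integrableOn
      (integrable_const (1:ℝ)).integrableOn measurableSet_ball.compl (fun u _ => hf1 u)
    rw [setIntegral_const] at h
    have hc : P (Metric.ball x t)ᶜ = 1 - P (Metric.ball x t) :=
      prob_compl_eq_one_sub measurableSet_ball
    have : (P (Metric.ball x t)ᶜ).toReal = 1 - (P (Metric.ball x t)).toReal := by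
      rw [hc, ENNReal.toReal_sub_of_le (prob_le_one) ENNReal.one_ne_top]
      simp
    change _ ≤ (P (Metric.ball x t)ᶜ).toReal • (1:ℝ) at h
    rw [this] at h
    simpa using h
  -- each small ball part
  have hball : ∀ i : Fin N, ∫ u in Metric.ball (c i) ρ, f u ∂P ≤ 1 / (n * Real.exp 1) := by
    intro i
    set p : ℝ := (P (Metric.ball (c i) ρ)).toReal with hp
    have hsub : ∀ u ∈ Metric.ball (c i) ρ, Metric.ball (c i) ρ ⊆ Metric.ball u δ := by
      intro u hu v hv
      simp only [Metric.mem_ball] at hu hv ⊢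
      calc dist v u ≤ dist v (c i) + dist (c i) u := dist_triangle _ _ _
        _ < ρ + ρ := by rw [dist_comm (c i) u]; exact add_lt_add hv hu
        _ ≤ δ := by linarith
    have hfb : ∀ u ∈ Metric.ball (c i) ρ, f u ≤ (1 - p) ^ n := by
      intro u hu
      apply pow_le_pow_left₀ (by linarith [htoReal_le_one (Metric.ball u δ)])
      have hle : P (Metric.ball (c i) ρ) ≤ P (Metric.ball u δ) := measure_mono (hsub u hu)
      have := ENNReal.toReal_mono (measure_ne_top P _) hle
      linarith
    have h := setIntegral_mono_on hint.integrableOn (integrable_const ((1-p)^n)).integrableOn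
      measurableSet_ball hfb
    rw [setIntegral_const, smul_eq_mul] at h
    calc ∫ u in Metric.ball (c i) ρ, f u ∂P ≤ p * (1 - p) ^ n := h
      _ = (1 - p) ^ n * p := by ring
      _ ≤ 1 / (n * Real.exp 1) :=
          pow_one_sub_mul_le_aux ENNReal.toReal_nonneg (htoReal_le_one _) hn
  -- ball x t part ≤ sum over covering balls
  have hmid : ∫ u in Metric.ball x t, f u ∂P
      ≤ ∑ i : Fin N, ∫ u in Metric.ball (c i) ρ, f u ∂P := by
    rw [← integral_indicator measurableSet_ball]
    have heq : ∀ i : Fin N, ∫ u in Metric.ball (c i) ρ, f u ∂P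
        = ∫ u, (Metric.ball (c i) ρ).indicator f u ∂P :=
      fun i => (integral_indicator measurableSet_ball).symm
    simp_rw [heq]
    rw [← integral_finset_sum _ (fun i _ => hint.indicator measurableSet_ball)]
    apply integral_mono (hint.indicator measurableSet_ball)
      (integrable_finset_sum _ (fun i _ => hint.indicator measurableSet_ball))
    intro u
    by_cases hu : u ∈ Metric.ball x t
    · rw [Set.indicator_of_mem hu]
      obtain ⟨i, hi⟩ := mem_iUnion.1 (hcover hu)
      calc f u = (Metric.ball (c i) ρ).indicator f u := (Set.indicator_of_mem hi f).symm
        _ ≤ ∑ j : Fin N, (Metric.ball (c j) ρ).indicator f u :=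
            Finset.single_le_sum (f := fun j => (Metric.ball (c j) ρ).indicator f u)
              (fun j _ => Set.indicator_nonneg (fun v _ => hf0 v) u) (Finset.mem_univ i)
    · rw [Set.indicator_of_notMem hu]
      exact Finset.sum_nonneg fun j _ => Set.indicator_nonneg (fun v _ => hf0 v) u
  have hsum : ∑ i : Fin N, ∫ u in Metric.ball (c i) ρ, f u ∂P
      ≤ (N : ℝ) / (n * Real.exp 1) := by
    calc ∑ i : Fin N, ∫ u in Metric.ball (c i) ρ, f u ∂P
        ≤ ∑ _i : Fin N, 1 / ((n : ℝ) * Real.exp 1) :=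
          Finset.sum_le_sum fun i _ => hball i
      _ = (N : ℝ) / (n * Real.exp 1) := by
          rw [Finset.sum_const, Finset.card_univ, Fintype.card_fin, nsmul_eq_mul]
          ring
  calc ∫ u, f u ∂P
      = ∫ u in Metric.ball x t, f u ∂P + ∫ u in (Metric.ball x t)ᶜ, f u ∂P := hsplit
    _ ≤ (N : ℝ) / (n * Real.exp 1) + (1 - (P (Metric.ball x t)).toReal) :=
        add_le_add (hmid.trans hsum) hcompl
    _ = (1 - (P (Metric.ball x t)).toReal) + N / (n * Real.exp 1) := by ring
end
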